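/- If G is a finite simple graph with no isolated vertex, then 2·γ_ev(G) ≤ γ_pr(G). -/

import Mathlib

open SimpleGraph

variable {V : Type*}

/-- `D` is a dominating set of `G`: every vertex outside `D` has a neighbor in `D`. -/
def IsDomSet (G : SimpleGraph V) (D : Set V) : Prop :=
  ∀ v ∉ D, ∃ u ∈ D, G.Adj u v

/-- The edge `e` ev-dominates the vertex `v`: `e` is incident to `v` or to a neighbor of `v`. -/
def EvDom (G : SimpleGraph V) (e : Sym2 V) (v : V) : Prop :=
  v ∈ e ∨ ∃ u ∈ e, G.Adj u v

/-- `M` is an edge-vertex dominating set of `G`. -/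
def IsEvDomSet (G : SimpleGraph V) (M : Set (Sym2 V)) : Prop :=
  M ⊆ G.edgeSet ∧ ∀ v : V, ∃ e ∈ M, EvDom G e v

/-- `M` is a minimum edge-vertex dominating set of `G`. -/
def IsMinEvDomSet (G : SimpleGraph V) (M : Set (Sym2 V)) : Prop :=
  IsEvDomSet G M ∧ ∀ M' : Set (Sym2 V), IsEvDomSet G M' → M.ncard ≤ M'.ncard

/-- The edge-vertex domination number `γ_ev(G)`. -/
noncomputable def evNum (G : SimpleGraph V) : ℕ :=
  sInf {n | ∃ M : Set (Sym2 V), IsEvDomSet G M ∧ M.ncard = n}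

/-- The set of all endpoints of edges in `M`. -/
def edgeVerts (M : Set (Sym2 V)) : Set V := {v | ∃ e ∈ M, v ∈ e}

/-- `M` is a perfect matching of the induced subgraph `G[D]`: a set of edges of `G`
with all endpoints in `D`, such that every vertex of `D` lies in exactly one edge of `M`. -/
def IsPMOn (G : SimpleGraph V) (D : Set V) (M : Set (Sym2 V)) : Prop :=
  M ⊆ G.edgeSet ∧ (∀ e ∈ M, ∀ v ∈ e, v ∈ D) ∧ ∀ v ∈ D, ∃! e, e ∈ M ∧ v ∈ e

/-- `D` is a paired-dominating set of `G`. -/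
def IsPairedDomSet (G : SimpleGraph V) (D : Set V) : Prop :=
  IsDomSet G D ∧ ∃ M : Set (Sym2 V), IsPMOn G D M

/-- `D` is a minimum paired-dominating set of `G`. -/
def IsMinPairedDomSet (G : SimpleGraph V) (D : Set V) : Prop :=
  IsPairedDomSet G D ∧ ∀ D' : Set V, IsPairedDomSet G D' → D.ncard ≤ D'.ncard

/-- The paired-domination number `γ_pr(G)`. -/
noncomputable def prNum (G : SimpleGraph V) : ℕ :=
  sInf {n | ∃ D : Set V, IsPairedDomSet G D ∧ D.ncard = n}

/-- No two distinct edges of `M` share a vertex. -/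
def NoSharedVertex (M : Set (Sym2 V)) : Prop :=
  ∀ e ∈ M, ∀ f ∈ M, e ≠ f → ∀ v : V, v ∈ e → v ∉ f

/-- `G` has no isolated vertex. -/
def NoIsolated (G : SimpleGraph V) : Prop := ∀ v : V, ∃ u, G.Adj u v


lemma card_edgeVerts [Fintype V] (M : Set (Sym2 V)) (hnd : ∀ e ∈ M, ¬ e.IsDiag)
    (hns : NoSharedVertex M) :
    (edgeVerts M).ncard = 2 * M.ncard := by
  classical
  refine Set.Finite.induction_on (motive := fun M _ => (∀ e ∈ M, ¬ e.IsDiag) →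
      NoSharedVertex M →
      (edgeVerts M).ncard = 2 * M.ncard) M (Set.toFinite M) ?_ ?_ hnd hns
  · intro _ _; simp [edgeVerts]
  · intro e M heM hMfin ih hnd hns
    have hed : edgeVerts (insert e M) = {v | v ∈ e} ∪ edgeVerts M := by
      ext v
      simp only [edgeVerts, Set.mem_setOf_eq, Set.mem_union, Set.mem_insert_iff]
      constructor
      · rintro ⟨f, (rfl | hf), hv⟩
        · exact Or.inl hv
        · exact Or.inr ⟨f, hf, hv⟩
      · rintro (hv | ⟨f, hf, hv⟩)
        · exact ⟨e, Or.inl rfl, hv⟩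
        · exact ⟨f, Or.inr hf, hv⟩
    have hdisj : Disjoint {v | v ∈ e} (edgeVerts M) := by
      rw [Set.disjoint_left]
      rintro v hv ⟨f, hf, hvf⟩
      exact hns e (Set.mem_insert _ _) f (Set.mem_insert_of_mem _ hf)
        (by rintro rfl; exact heM hf) v hv hvf
    induction e using Sym2.ind with
    | _ a b =>
      have hab : a ≠ b := by
        have := hnd _ (Set.mem_insert _ _); simpa [Sym2.isDiag_iff_proj_eq] using this
      have hset : {v | v ∈ s(a, b)} = ({a, b} : Set V) := by
        ext v; simp [Sym2.mem_iff]
      rw [hed, hset, Set.ncard_union_eq (hset ▸ hdisj),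
        Set.ncard_pair hab, Set.ncard_insert_of_notMem heM,
        ih (fun f hf => hnd f (Set.mem_insert_of_mem _ hf))
          (fun f hf g hg => hns f (Set.mem_insert_of_mem _ hf) g (Set.mem_insert_of_mem _ hg))]
      ring

lemma pm_noShared {G : SimpleGraph V} {D : Set V} {M : Set (Sym2 V)}
    (hpm : IsPMOn G D M) : NoSharedVertex M := by
  intro e he f hf hef v hve hvf
  obtain ⟨hsub, hin, huniq⟩ := hpm
  obtain ⟨g, _, hg⟩ := huniq v (hin e he v hve)
  exact hef ((hg e ⟨he, hve⟩).trans (hg f ⟨hf, hvf⟩).symm)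

lemma pm_evDom {G : SimpleGraph V} {D : Set V} {M : Set (Sym2 V)}
    (hD : IsDomSet G D) (hpm : IsPMOn G D M) : IsEvDomSet G M := by
  obtain ⟨hsub, hin, huniq⟩ := hpm
  refine ⟨hsub, fun v => ?_⟩
  by_cases hv : v ∈ D
  · obtain ⟨e, ⟨he, hve⟩, -⟩ := huniq v hv
    exact ⟨e, he, Or.inl hve⟩
  · obtain ⟨u, hu, hadj⟩ := hD v hv
    obtain ⟨e, ⟨he, hue⟩, -⟩ := huniq u hu
    exact ⟨e, he, Or.inr ⟨u, hue, hadj⟩⟩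

lemma pm_card [Fintype V] {G : SimpleGraph V} {D : Set V} {M : Set (Sym2 V)}
    (hpm : IsPMOn G D M) : D.ncard = 2 * M.ncard := by
  obtain ⟨hsub, hin, huniq⟩ := hpm
  have hD : edgeVerts M = D := by
    ext v
    constructor
    · rintro ⟨e, he, hve⟩; exact hin e he v hve
    · intro hv; obtain ⟨e, ⟨he, hve⟩, -⟩ := huniq v hv; exact ⟨e, he, hve⟩
  rw [← hD]
  exact card_edgeVerts M (fun e he => (G.not_isDiag_of_mem_edgeSet (hsub he)))
    (pm_noShared ⟨hsub, hin, huniq⟩)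

lemma exists_pairedDomSet [Fintype V] (G : SimpleGraph V) (hG : NoIsolated G) :
    ∃ D : Set V, IsPairedDomSet G D := by
  classical
  set S : Set (Set (Sym2 V)) := {M | M ⊆ G.edgeSet ∧ NoSharedVertex M} with hS
  obtain ⟨M, hMS, hmax⟩ := Set.Finite.exists_maximalFor Set.ncard S (Set.toFinite S)
    ⟨∅, by simp [hS, NoSharedVertex]⟩
  obtain ⟨hMsub, hMns⟩ := hMS
  refine ⟨edgeVerts M, ?_, M, hMsub, fun e he v hv => ⟨e, he, hv⟩, ?_⟩
  · -- dominating
    intro v hv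
    by_contra hno
    push_neg at hno
    obtain ⟨u, hadj⟩ := hG v
    have hu : u ∉ edgeVerts M := fun h => hno u h hadj
    have hnew : s(u, v) ∉ M := fun h => hv ⟨s(u, v), h, Sym2.mem_mk_right u v⟩
    have hM' : insert s(u, v) M ∈ S := by
      refine ⟨Set.insert_subset (G.mem_edgeSet.mpr hadj) hMsub, ?_⟩
      rintro e (rfl | he) f (rfl | hf) hef w hwe hwf
      · exact hef rfl
      · rcases Sym2.mem_iff.mp hwe with rfl | rfl
        · exact hu ⟨f, hf, hwf⟩
        · exact hv ⟨f, hf, hwf⟩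
      · rcases Sym2.mem_iff.mp hwf with rfl | rfl
        · exact hu ⟨e, he, hwe⟩
        · exact hv ⟨e, he, hwe⟩
      · exact hMns e he f hf hef w hwe hwf
    have hcard : (insert s(u, v) M).ncard = M.ncard + 1 :=
      Set.ncard_insert_of_notMem hnew
    have := hmax hM' (by omega)
    omega
  · -- every vertex of D is in a unique edge
    rintro v ⟨e, he, hve⟩
    refine ⟨e, ⟨he, hve⟩, ?_⟩
    rintro f ⟨hf, hvf⟩
    by_contra hfe
    exact hMns f hf e he hfe v hvf hve

theorem stmt13 [Fintype V] (G : SimpleGraph V) (hG : NoIsolated G) :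
    2 * evNum G ≤ prNum G := by
  classical
  obtain ⟨D0, hD0⟩ := exists_pairedDomSet G hG
  have hne : (prNum G) ∈ {n | ∃ D : Set V, IsPairedDomSet G D ∧ D.ncard = n} :=
    Nat.sInf_mem ⟨D0.ncard, D0, hD0, rfl⟩
  obtain ⟨D, hD, hDcard⟩ := hne
  obtain ⟨hdom, M, hpm⟩ := hD
  have hev : evNum G ≤ M.ncard :=
    Nat.sInf_le ⟨M, pm_evDom hdom hpm, rfl⟩
  have hcard := pm_card hpm
  omega
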